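/- Let z be a complex number with Re z > 0. Then lim_{α → 0⁺} [λ(αz) − λ(iα)] = πi/2 − log z, where for real 0 < α < 1 one sets λ(iα) := −log(1 − e^{−2πiα}), and log denotes the principal branch of the logarithm. -/

import Mathlib

open Filter Topology

/-- `λ(x) = −log(1 − e^{−2πx})` (equal to `Σ_{m≥1} e^{−2πmx}/m` for `Re x > 0`),
principal branch of `log`. -/
noncomputable def lam (x : ℂ) : ℂ := -Complex.log (1 - Complex.exp (-2 * Real.pi * x))

/-- `λ` restricted to the positive real axis (real-valued). -/
noncomputable def lamR (t : ℝ) : ℝ := -Real.log (1 - Real.exp (-2 * Real.pi * t))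

/-- The Dedekind sum `s(h, k) = Σ_{r=1}^{k−1} (r/k)(hr/k − ⌊hr/k⌋ − 1/2)`. -/
noncomputable def dedekindSum (h : ℤ) (k : ℕ) : ℝ :=
  ∑ r ∈ Finset.Icc 1 (k - 1),
    ((r : ℝ) / k) * ((h : ℝ) * r / k - ⌊(h : ℝ) * r / k⌋ - 1 / 2)

/-- A canonical integer `H` with `h·H ≡ −1 (mod k)` when `gcd(h,k) = 1`. -/
noncomputable def Hinv (h k : ℕ) : ℕ := (-(h : ZMod k)⁻¹).val

/-- The α-Kloosterman sum
`A_k^{(α)}(n, m) = Σ_{0 ≤ h < k, gcd(h,k)=1} exp(απi·s(h,k) + (2πi/k)(mH − nh))`. -/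
noncomputable def kloosterman (α : ℝ) (k : ℕ) (n m : ℤ) : ℂ :=
  ∑ h ∈ Finset.range k,
    if Nat.gcd h k = 1 then
      Complex.exp ((α : ℂ) * (Real.pi : ℝ) * Complex.I * (dedekindSum h k : ℝ) +
        2 * (Real.pi : ℝ) * Complex.I / (k : ℂ) *
          ((m : ℂ) * (Hinv h k : ℕ) - (n : ℂ) * (h : ℕ)))
    else 0

/-- The modified Bessel function of the first kind,
`I_ν(z) = (z/2)^ν Σ_{k≥0} (z/2)^{2k}/(k! Γ(ν+k+1))`, for real `ν` and `z ≥ 0`. -/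
noncomputable def besselI (ν z : ℝ) : ℝ :=
  (z / 2) ^ ν * ∑' k : ℕ, (z / 2) ^ (2 * k) / (k.factorial * Real.Gamma (ν + k + 1))

/-- `P(x)^α = ∏_{k≥1} exp(−α log(1 − x^k))`, principal branch of `log`. -/
noncomputable def Palpha (α : ℝ) (x : ℂ) : ℂ :=
  ∏' k : ℕ, Complex.exp (-(α : ℂ) * Complex.log (1 - x ^ (k + 1)))

/-- The fractional partition function `p_α(n)`: the `n`-th Maclaurin coefficient of
`P(x)^α` (which is a real number). -/
noncomputable def fracPart (α : ℝ) (n : ℕ) : ℝ :=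
  ((iteratedDeriv n (Palpha α) 0) / (n.factorial : ℂ)).re

/-- `ν_α(n) = √(n − α/24)`. -/
noncomputable def nuA (α : ℝ) (n : ℕ) : ℝ := Real.sqrt (n - α / 24)

/-- `μ_α(m) = √(α/24 − m)`. -/
noncomputable def muA (α : ℝ) (m : ℕ) : ℝ := Real.sqrt (α / 24 - m)

/-- The truncated series `p_α(n; δ)`. -/
noncomputable def pTrunc (α : ℝ) (n : ℕ) (δ : ℝ) : ℂ :=
  ((nuA α n ^ (-(α / 2) - 1) : ℝ) : ℂ) *
    ∑ m ∈ Finset.range (⌊α / 24⌋₊ + 1),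
      ((muA α m ^ (α / 2 + 1) * fracPart α m : ℝ) : ℂ) *
        ∑ k ∈ Finset.Ico 1 ⌈2 * Real.pi / δ * muA α m⌉₊,
          ((2 * Real.pi / k : ℝ) : ℂ) * kloosterman α k n m *
            ((besselI (α / 2 + 1) (4 * Real.pi / k * nuA α n * muA α m) : ℝ) : ℂ)

/-- The Jensen polynomial `J_a^{d,n}(X) = Σ_{j=0}^d C(d,j) a(n+j) X^j`. -/
noncomputable def jensenPoly (a : ℕ → ℝ) (d n : ℕ) : Polynomial ℝ :=
  ∑ j ∈ Finset.range (d + 1), Polynomial.C ((d.choose j : ℝ) * a (n + j)) * Polynomial.X ^ j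

lemma auxlim (w : ℂ) :
    Tendsto (fun a : ℝ => (1 - Complex.exp (-2*Real.pi*((a:ℂ)*w))) / (2*Real.pi*a)) (𝓝[>] 0)
      (𝓝 w) := by
  have h0 : HasDerivAt (fun a : ℝ => ((a:ℂ))) 1 0 := Complex.ofRealCLM.hasDerivAt
  have h1 : HasDerivAt (fun a : ℝ => -2*Real.pi*((a:ℂ)*w)) (-2*Real.pi*w) 0 := by
    simpa using ((h0.mul_const w).const_mul (-2*(Real.pi:ℂ)))
  have hd : HasDerivAt (fun a : ℝ => (1:ℂ) - Complex.exp (-2*Real.pi*((a:ℂ)*w))) (2*Real.pi*w) 0 := by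
    simpa using h1.cexp.const_sub (1:ℂ)
  have hs := hasDerivAt_iff_tendsto_slope.mp hd
  have hs2 : Tendsto (fun a : ℝ => (1 - Complex.exp (-2*Real.pi*((a:ℂ)*w))) / a) (𝓝[>] 0)
      (𝓝 (2*Real.pi*w)) := by
    refine (hs.mono_left (nhdsWithin_mono _ ?_)).congr (fun a => ?_)
    · intro a ha; exact ne_of_gt ha
    · simp [slope, Complex.real_smul, div_eq_inv_mul]
  have h3 := hs2.div_const (2*Real.pi)
  have hne : (2*Real.pi : ℂ) ≠ 0 := by
    simp [Real.pi_ne_zero, two_ne_zero]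
  have heq : (2*Real.pi*w)/(2*Real.pi : ℂ) = w := by field_simp
  rw [heq] at h3
  refine h3.congr (fun a => ?_)
  rw [div_div]; ring_nf


/-- `lim_{α → 0⁺} [λ(αz) − λ(iα)] = πi/2 − log z` for `Re z > 0`
(principal branch of `log`). -/
theorem lam_limit_zero_plus (z : ℂ) (hz : 0 < z.re) :
    Tendsto (fun a : ℝ => lam ((a : ℂ) * z) - lam (Complex.I * a))
      (𝓝[>] (0 : ℝ)) (𝓝 ((Real.pi : ℂ) * Complex.I / 2 - Complex.log z)) := by
  
  have hzc : ContinuousAt Complex.log z := continuousAt_clog (Complex.mem_slitPlane_iff.mpr (Or.inl hz))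
  have hIc : ContinuousAt Complex.log Complex.I := continuousAt_clog (Complex.mem_slitPlane_iff.mpr (Or.inr (by simp)))
  have t1 := hzc.tendsto.comp (auxlim z)
  have t2 := hIc.tendsto.comp (auxlim Complex.I)
  have tmain := t2.sub t1
  rw [Complex.log_I] at tmain
  have hlim : (Real.pi:ℂ)/2 * Complex.I = (Real.pi : ℂ) * Complex.I / 2 := by ring
  rw [hlim] at tmain
  refine Tendsto.congr' ?_ tmain
  have hmem : Set.Ioo (0:ℝ) 1 ∈ 𝓝[>] (0:ℝ) :=
    Ioo_mem_nhdsGT_of_mem (by constructor <;> norm_num)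
  filter_upwards [hmem] with a ha
  obtain ⟨ha0, ha1⟩ := ha
  have hpos : (0:ℝ) < 2*Real.pi*a := by positivity
  -- nonvanishing of numerators
  have hnum1 : (1 : ℂ) - Complex.exp (-2*Real.pi*((a:ℂ)*z)) ≠ 0 := by
    rw [sub_ne_zero]
    intro h
    have : ‖Complex.exp (-2*Real.pi*((a:ℂ)*z))‖ = 1 := by rw [← h]; simp
    rw [Complex.norm_exp] at this
    have hre : (-2*Real.pi*((a:ℂ)*z)).re = -(2*Real.pi*a*z.re) := by
      simp [Complex.mul_re, Complex.ofReal_re, Complex.ofReal_im]; ring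
    rw [hre, Real.exp_eq_one_iff] at this
    nlinarith [Real.pi_pos]
  have hnum2 : (1 : ℂ) - Complex.exp (-2*Real.pi*((a:ℂ)*Complex.I)) ≠ 0 := by
    rw [sub_ne_zero]
    intro h
    rw [eq_comm, Complex.exp_eq_one_iff] at h
    obtain ⟨n, hn⟩ := h
    have : -(2*Real.pi*a) = (n:ℝ)*(2*Real.pi) := by
      have := congrArg Complex.im hn
      simpa [Complex.mul_im, Complex.mul_re] using this
    have ha' : a = -(n:ℝ) := by
      have hpi := Real.pi_ne_zero
      field_simp at this
      nlinarith [Real.pi_pos]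
    rcases lt_or_ge n 0 with h' | h'
    · have : (n:ℝ) ≤ -1 := by exact_mod_cast Int.le_sub_one_of_lt h'
      linarith
    · have : (0:ℝ) ≤ (n:ℝ) := by exact_mod_cast h'
      linarith
  -- factor out 2πa
  have key : ∀ w : ℂ, (1 : ℂ) - Complex.exp (-2*Real.pi*((a:ℂ)*w)) ≠ 0 →
      Complex.log (1 - Complex.exp (-2*Real.pi*((a:ℂ)*w))) =
        Real.log (2*Real.pi*a) +
          Complex.log ((1 - Complex.exp (-2*Real.pi*((a:ℂ)*w))) / (2*Real.pi*a)) := by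
    intro w hw
    have hq : ((1 : ℂ) - Complex.exp (-2*Real.pi*((a:ℂ)*w))) / (2*Real.pi*a) ≠ 0 := by
      apply div_ne_zero hw
      intro h
      have : (2*Real.pi*a : ℝ) = 0 := by exact_mod_cast (by push_cast at h ⊢; exact h : ((2*Real.pi*a : ℝ) : ℂ) = 0)
      linarith
    calc Complex.log (1 - Complex.exp (-2*Real.pi*((a:ℂ)*w)))
        = Complex.log ((2*Real.pi*a : ℝ) * ((1 - Complex.exp (-2*Real.pi*((a:ℂ)*w))) / (2*Real.pi*a))) := by
          have hne2 : ((2*Real.pi*a : ℝ) : ℂ) ≠ 0 := by exact_mod_cast ne_of_gt hpos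
          congr 1
          push_cast at hne2 ⊢
          rw [← mul_div_assoc, mul_div_cancel_left₀ _ hne2]
      _ = Real.log (2*Real.pi*a) + Complex.log ((1 - Complex.exp (-2*Real.pi*((a:ℂ)*w))) / (2*Real.pi*a)) := by
          rw [Complex.log_ofReal_mul hpos hq]
  simp only [lam, Function.comp]
  have e1 : (-2 * (Real.pi:ℂ) * ((a:ℂ)*z)) = -2 * (Real.pi:ℂ) * ((a:ℂ)*z) := rfl
  have e2 : Complex.I * (a:ℂ) = (a:ℂ) * Complex.I := mul_comm _ _
  rw [e2, key z hnum1, key Complex.I hnum2]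
  ring
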